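/- Let d ≥ 1 and let (S_1,w_1),…,(S_{2r},w_{2r}) be a paired weighted sample on D = {1,…,d}. Then P_d · X̃_1ᵀ X̃_1 · M_{2→1} = P_d · X̃_1ᵀ X̃_{≤2} as d × d_2 real matrices. -/
import Mathlib


open Finset Matrix

/-- Design matrix `X̃_{≤2}` of a weighted sample. -/
noncomputable def X2mat (d r : ℕ) (S : Fin r × Bool → Finset (Fin d))
    (w : Fin r × Bool → ℝ) :
    Matrix (Fin r × Bool) {T : Finset (Fin d) // T.Nonempty ∧ T.card ≤ 2} ℝ :=
  fun ℓ T => Real.sqrt (w ℓ) * (if (T : Finset (Fin d)) ⊆ S ℓ then 1 else 0)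

/-- Design matrix `X̃_1` of a weighted sample. -/
noncomputable def X1mat (d r : ℕ) (S : Fin r × Bool → Finset (Fin d))
    (w : Fin r × Bool → ℝ) :
    Matrix (Fin r × Bool) (Fin d) ℝ :=
  fun ℓ i => Real.sqrt (w ℓ) * (if i ∈ S ℓ then 1 else 0)

/-- The matrix `M_{2→1}` with entries `1[i ∈ T]/|T|`. -/
noncomputable def M21 (d : ℕ) :
    Matrix (Fin d) {T : Finset (Fin d) // T.Nonempty ∧ T.card ≤ 2} ℝ :=
  fun i T => (if i ∈ (T : Finset (Fin d)) then 1 else 0) / ((T : Finset (Fin d)).card : ℝ)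

/-- `P_p = I − (1/p)·𝟙𝟙ᵀ`, the orthogonal projection off the all-ones vector. -/
noncomputable def projOnes (p : ℕ) : Matrix (Fin p) (Fin p) ℝ :=
  1 - (p : ℝ)⁻¹ • Matrix.of (fun _ _ => (1 : ℝ))

lemma key_q {d : ℕ} (T A : Finset (Fin d)) (hT : T.Nonempty) (hc : T.card ≤ 2) :
    ((T ∩ A).card : ℝ) / T.card - (if T ⊆ A then (1:ℝ) else 0)
      = ((T ∩ (Finset.univ \ A)).card : ℝ) / T.card
        - (if T ⊆ Finset.univ \ A then (1:ℝ) else 0) := by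
  have hTA : T ∩ (Finset.univ \ A) = T \ A := by ext x; simp
  have hcard : (T \ A).card = T.card - (T ∩ A).card := by
    have := Finset.card_inter_add_card_sdiff T A
    omega
  have hsub1 : (T ⊆ A) ↔ (T ∩ A).card = T.card := by
    constructor
    · intro h; rw [Finset.inter_eq_left.mpr h]
    · intro h
      exact Finset.inter_eq_left.mp
        (Finset.eq_of_subset_of_card_le Finset.inter_subset_left h.ge)
  have hsub2 : (T ⊆ Finset.univ \ A) ↔ (T ∩ A).card = 0 := by
    rw [Finset.card_eq_zero]
    constructor
    · intro h
      ext x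
      simp only [Finset.mem_inter, Finset.notMem_empty, iff_false, not_and]
      intro hx hxA
      have := h hx
      simp [hxA] at this
    · intro h x hx
      simp only [Finset.mem_sdiff, Finset.mem_univ, true_and]
      intro hxA
      have : x ∈ T ∩ A := Finset.mem_inter.mpr ⟨hx, hxA⟩
      rw [h] at this
      simp at this
  rw [hTA]
  simp only [hsub1, hsub2, hcard]
  have h1 : 1 ≤ T.card := hT.card_pos
  have h2 : (T ∩ A).card ≤ T.card := Finset.card_le_card Finset.inter_subset_left
  set a := (T ∩ A).card
  set t := T.card
  clear_value a t
  interval_cases t <;> interval_cases a <;> norm_num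

/-- For a paired weighted sample, `P_d · X̃₁ᵀX̃₁ · M_{2→1} = P_d · X̃₁ᵀX̃_{≤2}`. -/
theorem paired_gram_projection_identity
    (d r : ℕ) (hd : 1 ≤ d)
    (S : Fin r × Bool → Finset (Fin d)) (w : Fin r × Bool → ℝ)
    (hw : ∀ ℓ, 0 < w ℓ)
    (hpairS : ∀ j : Fin r, S (j, true) = (Finset.univ : Finset (Fin d)) \ S (j, false))
    (hpairw : ∀ j : Fin r, w (j, true) = w (j, false)) :
    projOnes d * ((X1mat d r S w).transpose * X1mat d r S w) * M21 d =
      projOnes d * ((X1mat d r S w).transpose * X2mat d r S w) := by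
  rw [Matrix.mul_assoc]
  set N := (X1mat d r S w).transpose * X1mat d r S w * M21 d with hN
  set N' := (X1mat d r S w).transpose * X2mat d r S w with hN'
  -- the per-pair "defect" q, independent of i
  have hconst : ∀ (T : {T : Finset (Fin d) // T.Nonempty ∧ T.card ≤ 2}) (i : Fin d),
      N i T - N' i T
        = ∑ j : Fin r, w (j, false) *
            ((((T : Finset (Fin d)) ∩ S (j, false)).card : ℝ)
                / ((T : Finset (Fin d)).card : ℝ)
              - (if (T : Finset (Fin d)) ⊆ S (j, false) then (1:ℝ) else 0)) := by
    intro T i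
    have hNval : N i T = ∑ ℓ : Fin r × Bool,
        (X1mat d r S w ℓ i) * (Real.sqrt (w ℓ) *
          ((((T : Finset (Fin d)) ∩ S ℓ).card : ℝ) / ((T : Finset (Fin d)).card : ℝ))) := by
      rw [hN, Matrix.mul_assoc, Matrix.mul_apply]
      refine Finset.sum_congr rfl fun ℓ _ => ?_
      rw [Matrix.transpose_apply, Matrix.mul_apply]
      congr 1
      have : ∀ k : Fin d, X1mat d r S w ℓ k * M21 d k T
          = Real.sqrt (w ℓ) / ((T : Finset (Fin d)).card : ℝ)
              * (if k ∈ (T : Finset (Fin d)) ∩ S ℓ then (1:ℝ) else 0) := by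
        intro k
        simp only [X1mat, M21, Finset.mem_inter]
        by_cases h1 : k ∈ S ℓ <;> by_cases h2 : k ∈ (T : Finset (Fin d)) <;>
            simp only [h1, h2, if_true, if_false, and_true, and_false,
              true_and, false_and, mul_zero, zero_mul, mul_one, zero_div]
        all_goals ring
      rw [Finset.sum_congr rfl fun k _ => this k, ← Finset.mul_sum]
      rw [Finset.sum_ite_mem, Finset.univ_inter]
      simp [Finset.inter_comm]
      ring
    have hN'val : N' i T = ∑ ℓ : Fin r × Bool,
        (X1mat d r S w ℓ i) * (Real.sqrt (w ℓ) *
          (if (T : Finset (Fin d)) ⊆ S ℓ then (1:ℝ) else 0)) := by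
      rw [hN', Matrix.mul_apply]
      refine Finset.sum_congr rfl fun ℓ _ => ?_
      rw [Matrix.transpose_apply]
      simp [X2mat]
    rw [hNval, hN'val, ← Finset.sum_sub_distrib]
    have hterm : ∀ ℓ : Fin r × Bool,
        (X1mat d r S w ℓ i) * (Real.sqrt (w ℓ) *
          ((((T : Finset (Fin d)) ∩ S ℓ).card : ℝ) / ((T : Finset (Fin d)).card : ℝ)))
        - (X1mat d r S w ℓ i) * (Real.sqrt (w ℓ) *
          (if (T : Finset (Fin d)) ⊆ S ℓ then (1:ℝ) else 0))
        = w ℓ * ((if i ∈ S ℓ then (1:ℝ) else 0) *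
            ((((T : Finset (Fin d)) ∩ S ℓ).card : ℝ) / ((T : Finset (Fin d)).card : ℝ)
              - (if (T : Finset (Fin d)) ⊆ S ℓ then (1:ℝ) else 0))) := by
      intro ℓ
      simp only [X1mat]
      have hs : Real.sqrt (w ℓ) * Real.sqrt (w ℓ) = w ℓ :=
        Real.mul_self_sqrt (hw ℓ).le
      linear_combination ((if i ∈ S ℓ then (1:ℝ) else 0) *
        ((((T : Finset (Fin d)) ∩ S ℓ).card : ℝ) / ((T : Finset (Fin d)).card : ℝ)
          - (if (T : Finset (Fin d)) ⊆ S ℓ then (1:ℝ) else 0))) * hs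
    rw [Finset.sum_congr rfl fun ℓ _ => hterm ℓ]
    rw [Fintype.sum_prod_type]
    refine Finset.sum_congr rfl fun j _ => ?_
    rw [Fintype.sum_bool]
    have hq := key_q (T : Finset (Fin d)) (S (j, false)) T.2.1 T.2.2
    rw [hpairw j, hpairS j, ← hq]
    have hmem : (if i ∈ (Finset.univ \ S (j, false)) then (1:ℝ) else 0)
        = 1 - (if i ∈ S (j, false) then (1:ℝ) else 0) := by
      by_cases h : i ∈ S (j, false) <;> simp [h]
    rw [hmem]
    ring
  ext i T
  have hd0 : (d : ℝ) ≠ 0 := Nat.cast_ne_zero.mpr (by omega)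
  set C := ∑ j : Fin r, w (j, false) *
      ((((T : Finset (Fin d)) ∩ S (j, false)).card : ℝ)
          / ((T : Finset (Fin d)).card : ℝ)
        - (if (T : Finset (Fin d)) ⊆ S (j, false) then (1:ℝ) else 0)) with hC
  have h1 : ∀ i' : Fin d, N i' T = N' i' T + C := fun i' => by
    have := hconst T i'; linarith
  simp only [projOnes, Matrix.sub_mul, Matrix.one_mul, Matrix.smul_mul,
    Matrix.sub_apply, Matrix.smul_apply, smul_eq_mul, Matrix.mul_apply,
    Matrix.of_apply, one_mul]
  have hzero : ∑ x : Fin d, ((1 : Matrix (Fin d) (Fin d) ℝ) i x - (d:ℝ)⁻¹ * 1) = 0 := by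
    rw [Finset.sum_sub_distrib]
    simp only [Matrix.one_apply, mul_one, Finset.sum_const, Finset.card_univ,
      Fintype.card_fin, nsmul_eq_mul, Finset.sum_ite_eq]
    simp [hd0]
  have hsplit : ∀ x : Fin d, ((1 : Matrix (Fin d) (Fin d) ℝ) i x - (d:ℝ)⁻¹ * 1) * N x T
      = ((1 : Matrix (Fin d) (Fin d) ℝ) i x - (d:ℝ)⁻¹ * 1) * N' x T
        + ((1 : Matrix (Fin d) (Fin d) ℝ) i x - (d:ℝ)⁻¹ * 1) * C := by
    intro x; rw [h1 x]; ring
  rw [Finset.sum_congr rfl fun x _ => hsplit x, Finset.sum_add_distrib,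
    ← Finset.sum_mul, hzero, zero_mul, add_zero]
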